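/- Let G be the join G_{n−2p−2}² ∨ G_{2p+2}³, where G_m^r denotes an (m−r)-regular graph on m vertices, for even n ≥ 6 and 1 ≤ p ≤ (n−4)/2. Then the partition of V(G) into the two join factors is equitable with quotient matrix [[n−2p−4, 2p+2],[n−2p−2, 2p−1]], and the spectral radius of G equals (n − 5 + √((n+1)² − 8p − 8))/2. -/

import Mathlib

open Finset

attribute [local instance] Classical.propDecidable

def IsMaxEigenvalue {V : Type*} [Fintype V] (A : Matrix V V ℝ) (ρ : ℝ) : Prop :=
  IsGreatest {μ : ℝ | ∃ v : V → ℝ, v ≠ 0 ∧ A.mulVec v = μ • v} ρ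

noncomputable def adjMat {V : Type*} (G : SimpleGraph V) : Matrix V V ℝ :=
  Matrix.of fun v w => if G.Adj v w then 1 else 0

/-- The join of two vertex-disjoint graphs: all edges between them are added. -/
def join {α β : Type*} (G : SimpleGraph α) (H : SimpleGraph β) : SimpleGraph (α ⊕ β) where
  Adj x y :=
    match x, y with
    | Sum.inl a, Sum.inl b => G.Adj a b
    | Sum.inr a, Sum.inr b => H.Adj a b
    | Sum.inl _, Sum.inr _ => True
    | Sum.inr _, Sum.inl _ => True
  symm := by
    constructor
    rintro (a | a) (b | b) h
    · exact G.symm.symm _ _ h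
    · trivial
    · trivial
    · exact H.symm.symm _ _ h
  loopless := by
    constructor
    rintro (a | a) h
    · exact G.loopless.irrefl a h
    · exact H.loopless.irrefl a h

lemma stmt17_filter_card {m d : ℕ} (G : SimpleGraph (Fin m)) (h : G.IsRegularOfDegree d)
    (x : Fin m) : (univ.filter fun j => G.Adj x j).card = d := by
  have := h x
  rw [← this, SimpleGraph.degree]
  congr 1
  rw [SimpleGraph.neighborFinset_eq_filter]

lemma stmt17_quad (a b c d s : ℝ) (h2 : s ^ 2 = (a - d) ^ 2 + 4 * b * c) :
    c * b + d * ((a + d + s) / 2 - a) = ((a + d + s) / 2) * ((a + d + s) / 2 - a) := by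
  nlinarith [h2]

lemma stmt17_perron {V : Type*} [Fintype V] (A : Matrix V V ℝ)
    (hsym : ∀ i j, A i j = A j i) (hnn : ∀ i j, 0 ≤ A i j)
    (w : V → ℝ) (hw_pos : ∀ i, 0 < w i) (hw_ne : w ≠ 0) (ρ : ℝ) (hρ0 : 0 ≤ ρ)
    (hrow : ∀ i, A.mulVec w i = ρ * w i) :
    IsMaxEigenvalue A ρ := by
  constructor
  · exact ⟨w, hw_ne, funext fun i => by rw [hrow i]; rfl⟩
  rintro μ ⟨v, hv_ne, hv⟩
  rcases le_or_gt μ 0 with hμ | hμ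
  · linarith
  set u : V → ℝ := fun i => |v i| with hu
  have key : ∀ i, μ * u i ≤ ∑ j, A i j * u j := by
    intro i
    have h1 : μ * u i = |μ * v i| := by rw [abs_mul, abs_of_pos hμ]
    have h2 : μ * v i = A.mulVec v i := by rw [hv]; rfl
    rw [h1, h2]
    calc |A.mulVec v i| = |∑ j, A i j * v j| := rfl
      _ ≤ ∑ j, |A i j * v j| := Finset.abs_sum_le_sum_abs _ _
      _ = ∑ j, A i j * u j := by
          refine Finset.sum_congr rfl fun j _ => ?_
          rw [abs_mul, abs_of_nonneg (hnn i j)]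
  set S : ℝ := ∑ i, u i * w i with hS
  have hS_pos : 0 < S := by
    obtain ⟨i0, hi0⟩ := Function.ne_iff.mp hv_ne
    apply Finset.sum_pos'
    · exact fun i _ => mul_nonneg (abs_nonneg _) (hw_pos i).le
    · exact ⟨i0, Finset.mem_univ _, mul_pos (abs_pos.mpr hi0) (hw_pos i0)⟩
  have hineq : μ * S ≤ ρ * S := by
    have step1 : μ * S = ∑ i, (μ * u i) * w i := by
      rw [hS, Finset.mul_sum]; exact Finset.sum_congr rfl fun i _ => by ring
    have step2 : ∑ i, (μ * u i) * w i ≤ ∑ i, (∑ j, A i j * u j) * w i :=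
      Finset.sum_le_sum fun i _ => mul_le_mul_of_nonneg_right (key i) (hw_pos i).le
    have step3 : ∑ i, (∑ j, A i j * u j) * w i = ∑ j, u j * (ρ * w j) := by
      calc ∑ i, (∑ j, A i j * u j) * w i = ∑ i, ∑ j, A i j * u j * w i := by
            exact Finset.sum_congr rfl fun i _ => by rw [Finset.sum_mul]
        _ = ∑ j, ∑ i, A i j * u j * w i := Finset.sum_comm
        _ = ∑ j, u j * (∑ i, A j i * w i) := by
            refine Finset.sum_congr rfl fun j _ => ?_
            rw [Finset.mul_sum]
            exact Finset.sum_congr rfl fun i _ => by rw [hsym i j]; ring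
        _ = ∑ j, u j * (ρ * w j) := by
            exact Finset.sum_congr rfl fun j _ => by rw [← hrow j]; rfl
    have step4 : ∑ j, u j * (ρ * w j) = ρ * S := by
      rw [hS, Finset.mul_sum]; exact Finset.sum_congr rfl fun j _ => by ring
    calc μ * S = ∑ i, (μ * u i) * w i := step1
      _ ≤ ∑ i, (∑ j, A i j * u j) * w i := step2
      _ = ∑ j, u j * (ρ * w j) := step3
      _ = ρ * S := step4
  exact le_of_mul_le_mul_right hineq hS_pos


set_option maxHeartbeats 1000000

/-- For even `n ≥ 6` and `1 ≤ p ≤ (n−4)/2`, the join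
`G = G²_{n−2p−2} ∨ G³_{2p+2}` of an `(n−2p−4)`-regular graph on `n−2p−2`
vertices and a `(2p−1)`-regular graph on `2p+2` vertices has the partition into
the two join factors equitable with quotient matrix
`[[n−2p−4, 2p+2], [n−2p−2, 2p−1]]`, and its spectral radius equals
`(n − 5 + √((n+1)² − 8p − 8))/2`. -/
theorem stmt17 (n p : ℕ) (hn : Even n) (hn6 : 6 ≤ n) (hp1 : 1 ≤ p)
    (hp2 : 2 * p ≤ n - 4)
    (G1 : SimpleGraph (Fin (n - 2 * p - 2))) (hG1 : G1.IsRegularOfDegree (n - 2 * p - 4))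
    (G2 : SimpleGraph (Fin (2 * p + 2))) (hG2 : G2.IsRegularOfDegree (2 * p - 1)) :
    (∀ a : Fin (n - 2 * p - 2),
        (univ.filter fun b : Fin (n - 2 * p - 2) =>
          (join G1 G2).Adj (Sum.inl a) (Sum.inl b)).card = n - 2 * p - 4 ∧
        (univ.filter fun b : Fin (2 * p + 2) =>
          (join G1 G2).Adj (Sum.inl a) (Sum.inr b)).card = 2 * p + 2) ∧
      (∀ a : Fin (2 * p + 2),
        (univ.filter fun b : Fin (n - 2 * p - 2) =>
          (join G1 G2).Adj (Sum.inr a) (Sum.inl b)).card = n - 2 * p - 2 ∧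
        (univ.filter fun b : Fin (2 * p + 2) =>
          (join G1 G2).Adj (Sum.inr a) (Sum.inr b)).card = 2 * p - 1) ∧
      IsMaxEigenvalue (adjMat (join G1 G2))
        (((n : ℝ) - 5 + Real.sqrt (((n : ℝ) + 1) ^ 2 - 8 * p - 8)) / 2) := by
  have hn4 : 2 * p + 4 ≤ n := by omega
  have hjll : ∀ (x : Fin (n - 2*p-2)) y, (join G1 G2).Adj (Sum.inl x) (Sum.inl y) ↔ G1.Adj x y :=
    fun _ _ => Iff.rfl
  have hjrr : ∀ (x : Fin (2*p+2)) y, (join G1 G2).Adj (Sum.inr x) (Sum.inr y) ↔ G2.Adj x y :=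
    fun _ _ => Iff.rfl
  have hjlr : ∀ (x : Fin (n - 2*p-2)) (y : Fin (2*p+2)),
      (join G1 G2).Adj (Sum.inl x) (Sum.inr y) ↔ True := fun _ _ => Iff.rfl
  have hjrl : ∀ (x : Fin (2*p+2)) (y : Fin (n - 2*p-2)),
      (join G1 G2).Adj (Sum.inr x) (Sum.inl y) ↔ True := fun _ _ => Iff.rfl
  have c11 : ∀ x : Fin (n - 2*p - 2),
      (univ.filter fun b => (join G1 G2).Adj (Sum.inl x) (Sum.inl b)).card = n - 2*p - 4 := by
    intro x
    simp only [hjll]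
    exact stmt17_filter_card G1 hG1 x
  have c12 : ∀ x : Fin (n - 2*p - 2),
      (univ.filter fun b : Fin (2*p+2) => (join G1 G2).Adj (Sum.inl x) (Sum.inr b)).card
        = 2*p + 2 := by
    intro x
    simp only [hjlr, Finset.filter_true, Finset.card_univ, Fintype.card_fin]
  have c21 : ∀ x : Fin (2*p + 2),
      (univ.filter fun b : Fin (n - 2*p-2) => (join G1 G2).Adj (Sum.inr x) (Sum.inl b)).card
        = n - 2*p - 2 := by
    intro x
    simp only [hjrl, Finset.filter_true, Finset.card_univ, Fintype.card_fin]
  have c22 : ∀ x : Fin (2*p + 2),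
      (univ.filter fun b => (join G1 G2).Adj (Sum.inr x) (Sum.inr b)).card = 2*p - 1 := by
    intro x
    simp only [hjrr]
    exact stmt17_filter_card G2 hG2 x
  refine ⟨fun x => ⟨c11 x, c12 x⟩, fun x => ⟨c21 x, c22 x⟩, ?_⟩
  have hnp : (2 * p + 4 : ℝ) ≤ (n : ℝ) := by exact_mod_cast hn4
  have hpR : (1 : ℝ) ≤ (p : ℝ) := by exact_mod_cast hp1
  have hD_nonneg : (0:ℝ) ≤ ((n : ℝ) + 1) ^ 2 - 8 * p - 8 := by nlinarith
  set s : ℝ := Real.sqrt (((n : ℝ) + 1) ^ 2 - 8 * p - 8) with hs_def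
  set ρ : ℝ := ((n : ℝ) - 5 + s) / 2 with hρ_def
  have hs0 : 0 ≤ s := Real.sqrt_nonneg _
  have hs2 : s ^ 2 = ((n : ℝ) + 1) ^ 2 - 8 * p - 8 := Real.sq_sqrt hD_nonneg
  have ha_def : ((n - 2*p - 4 : ℕ) : ℝ) = (n : ℝ) - 2*p - 4 := by
    have h : n - 2*p - 4 + (2*p + 4) = n := by omega
    have := congrArg (fun k : ℕ => (k : ℝ)) h
    push_cast at this
    linarith
  have hc_def : ((n - 2*p - 2 : ℕ) : ℝ) = (n : ℝ) - 2*p - 2 := by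
    have h : n - 2*p - 2 + (2*p + 2) = n := by omega
    have := congrArg (fun k : ℕ => (k : ℝ)) h
    push_cast at this
    linarith
  have hd_def : ((2*p - 1 : ℕ) : ℝ) = 2*(p:ℝ) - 1 := by
    have h : 2*p - 1 + 1 = 2*p := by omega
    have := congrArg (fun k : ℕ => (k : ℝ)) h
    push_cast at this
    linarith
  set a : ℝ := (n : ℝ) - 2*p - 4 with ha
  set b : ℝ := 2*(p:ℝ) + 2 with hb
  set c : ℝ := (n : ℝ) - 2*p - 2 with hc
  set d : ℝ := 2*(p:ℝ) - 1 with hd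
  have hb_pos : 0 < b := by rw [hb]; linarith
  have hρad : ρ = (a + d + s) / 2 := by rw [hρ_def, ha, hd]; ring
  have hs2' : s ^ 2 = (a - d) ^ 2 + 4 * b * c := by
    rw [hs2, ha, hb, hc, hd]; ring
  have hz_pos : 0 < ρ - a := by
    have h4bc : 0 < 4 * b * c := by rw [hb, hc]; nlinarith
    have hsq : (a - d) ^ 2 < s ^ 2 := by rw [hs2']; linarith
    have hlt : a - d < s := by nlinarith
    rw [hρad]
    linarith
  set w : Fin (n - 2*p - 2) ⊕ Fin (2*p + 2) → ℝ :=
    Sum.elim (fun _ => b) (fun _ => ρ - a) with hw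
  have hw_pos : ∀ i, 0 < w i := by
    rintro (x | x)
    · exact hb_pos
    · exact hz_pos
  have hw_ne : w ≠ 0 := by
    intro h
    have hpos : 0 < n - 2*p - 2 := by omega
    have h2 := hw_pos (Sum.inl ⟨0, hpos⟩)
    rw [h] at h2
    exact lt_irrefl 0 h2
  have hquad : c * b + d * (ρ - a) = ρ * (ρ - a) := by
    rw [hρad]
    exact stmt17_quad a b c d s hs2'
  have hrow : ∀ (i : Fin (n - 2*p - 2) ⊕ Fin (2*p + 2)),
      (adjMat (join G1 G2)).mulVec w i = ρ * w i := by
    intro i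
    have hexp : (adjMat (join G1 G2)).mulVec w i =
        (∑ j : Fin (n - 2*p-2), (if (join G1 G2).Adj i (Sum.inl j) then (1:ℝ) else 0) * w (Sum.inl j))
          + ∑ j : Fin (2*p+2), (if (join G1 G2).Adj i (Sum.inr j) then (1:ℝ) else 0) * w (Sum.inr j) := by
      simp [Matrix.mulVec, dotProduct, adjMat, Fintype.sum_sum_type]
    rw [hexp]
    rcases i with x | x
    · have e1 : ∑ j : Fin (n - 2*p-2), (if (join G1 G2).Adj (Sum.inl x) (Sum.inl j) then (1:ℝ) else 0) * w (Sum.inl j)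
          = a * b := by
        simp only [hw, Sum.elim_inl]
        rw [← Finset.sum_mul, Finset.sum_boole, c11 x, ha_def]
      have e2 : ∑ j : Fin (2*p+2), (if (join G1 G2).Adj (Sum.inl x) (Sum.inr j) then (1:ℝ) else 0) * w (Sum.inr j)
          = b * (ρ - a) := by
        simp only [hw, Sum.elim_inr]
        rw [← Finset.sum_mul, Finset.sum_boole, c12 x]
        rw [hb]
        push_cast
        ring
      rw [e1, e2]
      simp only [hw, Sum.elim_inl]
      ring
    · have e1 : ∑ j : Fin (n - 2*p-2), (if (join G1 G2).Adj (Sum.inr x) (Sum.inl j) then (1:ℝ) else 0) * w (Sum.inl j)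
          = c * b := by
        simp only [hw, Sum.elim_inl]
        rw [← Finset.sum_mul, Finset.sum_boole, c21 x, hc_def]
      have e2 : ∑ j : Fin (2*p+2), (if (join G1 G2).Adj (Sum.inr x) (Sum.inr j) then (1:ℝ) else 0) * w (Sum.inr j)
          = d * (ρ - a) := by
        simp only [hw, Sum.elim_inr]
        rw [← Finset.sum_mul, Finset.sum_boole, c22 x, hd_def]
      rw [e1, e2, hquad]
      simp only [hw, Sum.elim_inr]
  have hρ0 : 0 ≤ ρ := by
    rw [hρ_def]
    have h6 : (6:ℝ) ≤ (n:ℝ) := by exact_mod_cast hn6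
    linarith
  have hsym : ∀ i j, adjMat (join G1 G2) i j = adjMat (join G1 G2) j i := by
    intro i j
    simp only [adjMat, Matrix.of_apply]
    rw [SimpleGraph.adj_comm]
  have hnn : ∀ i j, (0:ℝ) ≤ adjMat (join G1 G2) i j := by
    intro i j
    simp only [adjMat, Matrix.of_apply]
    split <;> norm_num
  exact stmt17_perron (adjMat (join G1 G2)) hsym hnn w hw_pos hw_ne ρ hρ0 hrow
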